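/- arXiv:2010.01017 — 3 statements merged into one kernel-verified Lean document; each statement's English description precedes it below -/
import Mathlib

section
/- Let v be a vector of real-valued vote counts over a finite set of outcomes with v_{o*} ≥ v_o for all o, and let M output argmax_o (v_o + Lap(1/γ)) where independent Laplace noise with scale 1/γ is added to each count. Then Pr[M(d) ≠ o*] ≤ Σ_{o ≠ o*} (2 + γ(v_{o*} − v_o)) / (4·exp(γ(v_{o*} − v_o))). -/
open MeasureTheory ProbabilityTheory

/-- The density of the Laplace distribution `Lap(1/γ)`: `(γ/2) exp(-γ|x|)`. -/
noncomputable def laplacePDF (γ x : ℝ) : ℝ := (γ / 2) * Real.exp (-γ * |x|)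

section Aux
open Set Real

/-- The tail function `Pr[Lap(1/γ) ≥ s]`. -/
noncomputable def lapTail (γ s : ℝ) : ℝ :=
  if 0 ≤ s then Real.exp (-(γ * s)) / 2 else 1 - Real.exp (γ * s) / 2

lemma iOnExpNegMulIoi {a : ℝ} (ha : 0 < a) (c : ℝ) :
    IntegrableOn (fun x => Real.exp (-(a * x))) (Ioi c) := by
  simpa [neg_mul, mul_comm] using exp_neg_integrableOn_Ioi c ha

lemma iOnExpMulIic {a : ℝ} (ha : 0 < a) (c : ℝ) :
    IntegrableOn (fun x => Real.exp (a * x)) (Iic c) := by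
  rw [← (Measure.measurePreserving_neg (volume : Measure ℝ)).integrableOn_comp_preimage
      (Homeomorph.neg ℝ).measurableEmbedding]
  simpa [Function.comp_def, neg_Iic, mul_neg, integrableOn_Ici_iff_integrableOn_Ioi] using
    iOnExpNegMulIoi ha (-c)

lemma intExpNegMulIoi {a : ℝ} (ha : 0 < a) (c : ℝ) :
    ∫ x in Ioi c, Real.exp (-(a * x)) = Real.exp (-(a * c)) / a := by
  have h := integral_comp_mul_left_Ioi (fun x => Real.exp (-x)) c ha
  simp only [smul_eq_mul] at h
  rw [h, integral_exp_neg_Ioi]; ring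

lemma intExpMulIic {a : ℝ} (ha : 0 < a) (c : ℝ) :
    ∫ x in Iic c, Real.exp (a * x) = Real.exp (a * c) / a := by
  have h := integral_comp_neg_Iic c (fun x => Real.exp (-(a * x)))
  simp only [mul_neg, neg_neg] at h
  rw [h, intExpNegMulIoi ha]; ring_nf

lemma intExpMulIoc {a : ℝ} (b c : ℝ) (hbc : b ≤ c) (ha : a ≠ 0) :
    ∫ x in Ioc b c, Real.exp (a * x) = (Real.exp (a * c) - Real.exp (a * b)) / a := by
  rw [← intervalIntegral.integral_of_le hbc,
    intervalIntegral.integral_comp_mul_left (fun x => Real.exp x) ha, integral_exp]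
  simp [smul_eq_mul]; ring

lemma lapPDF_measurable (γ : ℝ) : Measurable (laplacePDF γ) := by
  unfold laplacePDF; fun_prop

lemma lapPDF_nonneg {γ : ℝ} (hγ : 0 < γ) (x : ℝ) : 0 ≤ laplacePDF γ x := by
  unfold laplacePDF; positivity

lemma lapPDF_integrable {γ : ℝ} (hγ : 0 < γ) : Integrable (laplacePDF γ) := by
  have h1 : IntegrableOn (laplacePDF γ) (Iic 0) := by
    refine IntegrableOn.congr_fun ((iOnExpMulIic hγ 0).const_mul (γ / 2))
      (fun x hx => ?_) measurableSet_Iic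
    simp only [laplacePDF, abs_of_nonpos (mem_Iic.mp hx)]; ring_nf
  have h2 : IntegrableOn (laplacePDF γ) (Ioi 0) := by
    refine IntegrableOn.congr_fun ((iOnExpNegMulIoi hγ 0).const_mul (γ / 2))
      (fun x hx => ?_) measurableSet_Ioi
    simp only [laplacePDF, abs_of_pos (mem_Ioi.mp hx)]; ring_nf
  have := h1.union h2
  rw [Iic_union_Ioi] at this
  exact integrableOn_univ.mp this

lemma lapTail_eq {γ : ℝ} (hγ : 0 < γ) (s : ℝ) :
    ∫ x in Ici s, laplacePDF γ x = lapTail γ s := by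
  have base : ∀ c : ℝ, 0 ≤ c → ∫ x in Ici c, laplacePDF γ x = Real.exp (-(γ * c)) / 2 := by
    intro c hc
    rw [setIntegral_congr_fun measurableSet_Ici
      (g := fun x => (γ / 2) * Real.exp (-(γ * x)))
      (fun x hx => by
        simp only [laplacePDF, abs_of_nonneg (hc.trans (mem_Ici.mp hx))]; ring_nf)]
    rw [integral_Ici_eq_integral_Ioi, integral_const_mul, intExpNegMulIoi hγ]
    field_simp
  rcases le_or_gt 0 s with hs | hs
  · rw [lapTail, if_pos hs, base s hs]
  · rw [lapTail, if_neg (not_le.mpr hs)]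
    have hsplit : Ici s = Ico s 0 ∪ Ici 0 := (Ico_union_Ici_eq_Ici hs.le).symm
    rw [hsplit, setIntegral_union ((Iio_disjoint_Ici le_rfl).mono_left Ico_subset_Iio_self)
      measurableSet_Ici ((lapPDF_integrable hγ).integrableOn)
      ((lapPDF_integrable hγ).integrableOn)]
    rw [base 0 le_rfl]
    have : ∫ x in Ico s 0, laplacePDF γ x = ∫ x in Ioc s 0, (γ / 2) * Real.exp (γ * x) := by
      rw [integral_Ico_eq_integral_Ioo, ← integral_Ioc_eq_integral_Ioo]
      refine setIntegral_congr_fun measurableSet_Ioc (fun x hx => ?_)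
      simp only [laplacePDF, abs_of_nonpos (mem_Ioc.mp hx).2]; ring_nf
    rw [this, integral_const_mul, intExpMulIoc s 0 hs.le hγ.ne']
    field_simp
    ring_nf; rw [Real.exp_zero]; ring

lemma lapTail_nonneg {γ : ℝ} (hγ : 0 < γ) (s : ℝ) : 0 ≤ lapTail γ s := by
  unfold lapTail
  split_ifs with h
  · positivity
  · nlinarith [Real.exp_le_one_iff.mpr (by nlinarith : γ * s ≤ 0)]

lemma lapTail_le_one {γ : ℝ} (hγ : 0 < γ) (s : ℝ) : lapTail γ s ≤ 1 := by
  unfold lapTail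
  split_ifs with h
  · nlinarith [Real.exp_le_one_iff.mpr (by nlinarith : -(γ * s) ≤ 0)]
  · nlinarith [Real.exp_pos (γ * s)]

lemma lapTail_measurable (γ : ℝ) : Measurable (lapTail γ) := by
  unfold lapTail
  exact Measurable.ite (measurableSet_le measurable_const measurable_id) (by fun_prop) (by fun_prop)

lemma conv_integrable {γ t : ℝ} (hγ : 0 < γ) :
    Integrable (fun x => laplacePDF γ x * lapTail γ (t + x)) := by
  refine (lapPDF_integrable hγ).mono ?_ ?_
  · exact ((lapPDF_measurable γ).mul
      ((lapTail_measurable γ).comp (by fun_prop))).aestronglyMeasurable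
  · refine Filter.Eventually.of_forall (fun x => ?_)
    rw [Real.norm_eq_abs, Real.norm_eq_abs,
      abs_of_nonneg (mul_nonneg (lapPDF_nonneg hγ x) (lapTail_nonneg hγ _)),
      abs_of_nonneg (lapPDF_nonneg hγ x)]
    nlinarith [lapPDF_nonneg hγ x, lapTail_le_one hγ (t + x), lapTail_nonneg hγ (t + x)]

lemma conv_eq {γ t : ℝ} (hγ : 0 < γ) (ht : 0 ≤ t) :
    ∫ x, laplacePDF γ x * lapTail γ (t + x)
      = (2 + γ * t) / (4 * Real.exp (γ * t)) := by
  have hint := conv_integrable (γ := γ) (t := t) hγ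
  rw [← setIntegral_univ (μ := volume), ← Iic_union_Ioi (a := -t),
    setIntegral_union (Iic_disjoint_Ioi le_rfl) measurableSet_Ioi
      hint.integrableOn hint.integrableOn,
    show Ioi (-t) = Ioc (-t) 0 ∪ Ioi 0 from (Ioc_union_Ioi_eq_Ioi (by linarith)).symm,
    setIntegral_union ((Iic_disjoint_Ioi le_rfl).mono_left Ioc_subset_Iic_self)
      measurableSet_Ioi hint.integrableOn hint.integrableOn]
  have e1 : ∫ x in Iic (-t), laplacePDF γ x * lapTail γ (t + x)
      = 3 * Real.exp (-(γ * t)) / 8 := by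
    have congr1 : ∀ x ∈ Iic (-t), laplacePDF γ x * lapTail γ (t + x)
        = (γ/2) * Real.exp (γ * x) - (γ/4) * Real.exp (γ * t) * Real.exp ((2*γ) * x) := by
      intro x hx
      have hx' : x ≤ -t := mem_Iic.mp hx
      have hx0 : x ≤ 0 := by linarith
      have htail : lapTail γ (t + x) = 1 - Real.exp (γ * (t + x)) / 2 := by
        unfold lapTail
        rcases lt_or_eq_of_le (by linarith : t + x ≤ 0) with h | h
        · rw [if_neg (not_le.mpr h)]
        · rw [h]; norm_num
      have h2 : Real.exp (γ*t) * Real.exp (2*γ*x) = Real.exp (γ*x) * Real.exp (γ*(t+x)) := by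
        rw [← Real.exp_add, ← Real.exp_add]; ring_nf
      rw [htail, laplacePDF, abs_of_nonpos hx0]
      ring_nf
      ring_nf at h2
      rw [show γ * x + γ * t = γ * t + γ * x from add_comm _ _]
      linear_combination (γ/4) * h2
    rw [setIntegral_congr_fun measurableSet_Iic congr1, integral_sub
      ((iOnExpMulIic hγ (-t)).const_mul _)
      (((iOnExpMulIic (by linarith : (0:ℝ) < 2*γ) (-t)).const_mul _)),
      integral_const_mul, integral_const_mul, intExpMulIic hγ,
      intExpMulIic (by linarith : (0:ℝ) < 2*γ)]
    rw [show γ * -t = -(γ*t) by ring, show 2*γ*(-t) = -(γ*t) + -(γ*t) by ring, Real.exp_add]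
    rw [show γ*t = -(-(γ*t)) by ring, Real.exp_neg]
    field_simp
    ring
  have e2 : ∫ x in Ioc (-t) 0, laplacePDF γ x * lapTail γ (t + x)
      = γ * t * Real.exp (-(γ * t)) / 4 := by
    have congr2 : ∀ x ∈ Ioc (-t) 0, laplacePDF γ x * lapTail γ (t + x)
        = (γ/4) * Real.exp (-(γ * t)) := by
      intro x hx
      obtain ⟨hx1, hx2⟩ := hx
      have : lapTail γ (t + x) = Real.exp (-(γ * (t + x))) / 2 := by
        unfold lapTail; rw [if_pos (by linarith)]
      have h2 : Real.exp (γ*x) * Real.exp (-(γ*(t+x))) = Real.exp (-(γ*t)) := by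
        rw [← Real.exp_add]; ring_nf
      rw [this, laplacePDF, abs_of_nonpos hx2]
      ring_nf
      ring_nf at h2
      linear_combination (γ/4) * h2
    rw [setIntegral_congr_fun measurableSet_Ioc congr2, setIntegral_const]
    simp only [measureReal_def, Real.volume_Ioc, smul_eq_mul]
    rw [ENNReal.toReal_ofReal (by linarith)]
    ring
  have e3 : ∫ x in Ioi 0, laplacePDF γ x * lapTail γ (t + x)
      = Real.exp (-(γ * t)) / 8 := by
    have congr3 : ∀ x ∈ Ioi (0:ℝ), laplacePDF γ x * lapTail γ (t + x)
        = (γ/4) * Real.exp (-(γ * t)) * Real.exp (-((2*γ) * x)) := by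
      intro x hx
      have hx0 : (0:ℝ) < x := hx
      have : lapTail γ (t + x) = Real.exp (-(γ * (t + x))) / 2 := by
        unfold lapTail; rw [if_pos (by linarith)]
      have h2 : Real.exp (-(γ*x)) * Real.exp (-(γ*(t+x)))
          = Real.exp (-(γ*t)) * Real.exp (-(2*γ*x)) := by
        rw [← Real.exp_add, ← Real.exp_add]; ring_nf
      rw [this, laplacePDF, abs_of_pos hx0]
      ring_nf
      ring_nf at h2
      linear_combination (γ/4) * h2
    rw [setIntegral_congr_fun measurableSet_Ioi congr3, integral_const_mul,
      intExpNegMulIoi (by linarith : (0:ℝ) < 2*γ)]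
    simp only [mul_zero, neg_zero, Real.exp_zero]
    field_simp; ring
  rw [e1, e2, e3, Real.exp_neg]
  field_simp
  ring

/-- The Laplace measure. -/
noncomputable def lapMeasure (γ : ℝ) : Measure ℝ :=
  volume.withDensity (fun x => ENNReal.ofReal (laplacePDF γ x))

lemma lapMeasure_Ici {γ : ℝ} (hγ : 0 < γ) (s : ℝ) :
    lapMeasure γ (Ici s) = ENNReal.ofReal (lapTail γ s) := by
  rw [lapMeasure, withDensity_apply _ measurableSet_Ici,
    ← ofReal_integral_eq_lintegral_ofReal ((lapPDF_integrable hγ).integrableOn)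
      (ae_of_all _ (lapPDF_nonneg hγ)),
    lapTail_eq hγ]

/-- Key bound: probability that an independent copy exceeds another by `t`. -/
lemma lap_diff_prob {A : Type*} [MeasurableSpace A] (μ : Measure A) [IsProbabilityMeasure μ]
    {γ : ℝ} (hγ : 0 < γ) {X Y : A → ℝ} (hX : Measurable X) (hY : Measurable Y)
    (hlX : μ.map X = lapMeasure γ) (hlY : μ.map Y = lapMeasure γ)
    (hXY : IndepFun X Y μ) {t : ℝ} (ht : 0 ≤ t) :
    μ {a | t + X a ≤ Y a} = ENNReal.ofReal ((2 + γ * t) / (4 * Real.exp (γ * t))) := by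
  have hprob : IsProbabilityMeasure (lapMeasure γ) := by
    rw [← hlX]; exact Measure.isProbabilityMeasure_map hX.aemeasurable
  have hS : MeasurableSet {p : ℝ × ℝ | t + p.1 ≤ p.2} :=
    measurableSet_le (measurable_const.add measurable_fst) measurable_snd
  have hmap : μ.map (fun a => (X a, Y a)) = (lapMeasure γ).prod (lapMeasure γ) := by
    have h := (indepFun_iff_map_prod_eq_prod_map_map hX.aemeasurable hY.aemeasurable).mp hXY
    rw [hlX, hlY] at h
    exact h
  have step1 : μ {a | t + X a ≤ Y a}
      = ((lapMeasure γ).prod (lapMeasure γ)) {p : ℝ × ℝ | t + p.1 ≤ p.2} := by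
    rw [← hmap, Measure.map_apply (hX.prodMk hY) hS]
    rfl
  rw [step1, Measure.prod_apply hS]
  have preim : ∀ x : ℝ, (Prod.mk x ⁻¹' {p : ℝ × ℝ | t + p.1 ≤ p.2}) = Set.Ici (t + x) := by
    intro x; ext y; simp [Set.mem_Ici]
  simp_rw [preim]
  calc ∫⁻ x, lapMeasure γ (Set.Ici (t + x)) ∂(lapMeasure γ)
      = ∫⁻ x, ENNReal.ofReal (lapTail γ (t + x)) ∂(lapMeasure γ) := by
        simp_rw [lapMeasure_Ici hγ]
    _ = ∫⁻ x, ENNReal.ofReal (laplacePDF γ x) * ENNReal.ofReal (lapTail γ (t + x)) := by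
        rw [lapMeasure, lintegral_withDensity_eq_lintegral_mul _
          (by exact (lapPDF_measurable γ).ennreal_ofReal)
          (by exact ((lapTail_measurable γ).comp (by fun_prop)).ennreal_ofReal)]
        rfl
    _ = ∫⁻ x, ENNReal.ofReal (laplacePDF γ x * lapTail γ (t + x)) := by
        simp_rw [ENNReal.ofReal_mul (lapPDF_nonneg hγ _)]
    _ = ENNReal.ofReal (∫ x, laplacePDF γ x * lapTail γ (t + x)) := by
        rw [← ofReal_integral_eq_lintegral_ofReal (conv_integrable hγ)
          (Filter.Eventually.of_forall (fun x =>
            mul_nonneg (lapPDF_nonneg hγ x) (lapTail_nonneg hγ _)))]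
    _ = ENNReal.ofReal ((2 + γ * t) / (4 * Real.exp (γ * t))) := by rw [conv_eq hγ ht]

end Aux

/-- Let `v` be a label score (vote count) vector with `v o* ≥ v o` for all `o`,
and let `M` output the argmax of the scores after adding i.i.d. `Lap(1/γ)` noise
to each coordinate. Then
`Pr[M(d) ≠ o*] ≤ ∑_{o ≠ o*} (2 + γ(v_{o*} - v_o)) / (4 exp(γ(v_{o*} - v_o)))`. -/
theorem stmt_2 {O : Type*} [Fintype O] [DecidableEq O] [MeasurableSpace O]
    [MeasurableSingletonClass O]
    {A : Type*} [MeasurableSpace A] (μ : Measure A) [IsProbabilityMeasure μ]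
    (γ : ℝ) (hγ : 0 < γ)
    (v : O → ℝ) (oStar : O) (hmax : ∀ o, v o ≤ v oStar)
    (N : O → A → ℝ) (hN : ∀ o, Measurable (N o))
    (hlaw : ∀ o, μ.map (N o)
      = volume.withDensity (fun x => ENNReal.ofReal (laplacePDF γ x)))
    (hindep : iIndepFun N μ)
    (M : A → O) (hM : Measurable M)
    (hargmax : ∀ a o, v o + N o a ≤ v (M a) + N (M a) a) :
    μ {a | M a ≠ oStar}
      ≤ ENNReal.ofReal (∑ o ∈ Finset.univ.erase oStar,
          (2 + γ * (v oStar - v o)) / (4 * Real.exp (γ * (v oStar - v o)))) := by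
  have hsub : {a | M a ≠ oStar}
      ⊆ ⋃ o ∈ Finset.univ.erase oStar, {a | (v oStar - v o) + N oStar a ≤ N o a} := by
    intro a ha
    have h1 := hargmax a oStar
    refine Set.mem_biUnion (Finset.mem_erase.mpr ⟨ha, Finset.mem_univ _⟩) ?_
    show (v oStar - v (M a)) + N oStar a ≤ N (M a) a
    linarith
  calc μ {a | M a ≠ oStar}
      ≤ μ (⋃ o ∈ Finset.univ.erase oStar, {a | (v oStar - v o) + N oStar a ≤ N o a}) :=
        measure_mono hsub
    _ ≤ ∑ o ∈ Finset.univ.erase oStar, μ {a | (v oStar - v o) + N oStar a ≤ N o a} :=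
        measure_biUnion_finset_le _ _
    _ = ∑ o ∈ Finset.univ.erase oStar, ENNReal.ofReal
          ((2 + γ * (v oStar - v o)) / (4 * Real.exp (γ * (v oStar - v o)))) := by
        refine Finset.sum_congr rfl (fun o ho => ?_)
        have hne : (oStar : O) ≠ o := (Finset.mem_erase.mp ho).1.symm
        exact lap_diff_prob μ hγ (hN oStar) (hN o) (hlaw oStar) (hlaw o)
          (hindep.indepFun hne) (by linarith [hmax o])
    _ = ENNReal.ofReal (∑ o ∈ Finset.univ.erase oStar,
          (2 + γ * (v oStar - v o)) / (4 * Real.exp (γ * (v oStar - v o)))) := by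
        rw [ENNReal.ofReal_sum_of_nonneg]
        intro o ho
        have h1 := hmax o
        have h2 := Real.exp_pos (γ * (v oStar - v o))
        apply div_nonneg <;> nlinarith
end

section
/- For any ε ≥ 0, l ≥ 0, and q ∈ [0,1) with q < (e^{ε}−1)/(e^{2ε}−1), setting the data-dependent bound B(q) = log((1−q)((1−q)/(1−e^{ε}q))^l + q·e^{εl}): B is monotonically nondecreasing in q on this range. -/
open Real

/-- The data-dependent bound
`B(q) = log((1-q)((1-q)/(1-e^ε q))^l + q e^{ε l})` is monotonically
nondecreasing in `q` on the range `0 ≤ q < (e^ε - 1)/(e^{2ε} - 1)`. -/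
theorem stmt_10 (ε l : ℝ) (hε : 0 ≤ ε) (hl : 0 ≤ l) :
    ∀ q₁ q₂ : ℝ, 0 ≤ q₁ → q₁ ≤ q₂ → q₂ < 1 →
      q₂ < (Real.exp ε - 1) / (Real.exp (2 * ε) - 1) →
      Real.log ((1 - q₁) * ((1 - q₁) / (1 - Real.exp ε * q₁)) ^ l
          + q₁ * Real.exp (ε * l))
        ≤ Real.log ((1 - q₂) * ((1 - q₂) / (1 - Real.exp ε * q₂)) ^ l
            + q₂ * Real.exp (ε * l)) := by
  intro q₁ q₂ hq₁ h12 hq₂1 hq₂c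
  rcases eq_or_lt_of_le hε with hε0 | hεpos
  · -- ε = 0 : the bound (e^0-1)/(e^0-1) = 0/0 = 0, contradiction
    exfalso
    subst hε0
    simp [Real.exp_zero] at hq₂c
    linarith [hq₁.trans h12]
  set a := Real.exp ε with ha_def
  have ha1 : 1 < a := by
    rw [ha_def, show (1:ℝ) = Real.exp 0 by simp]
    exact Real.exp_lt_exp.mpr hεpos
  -- rewrite the constraint as q₂ < 1/(a+1)
  have hsq : Real.exp (2 * ε) = a * a := by
    rw [two_mul, Real.exp_add]
  have hc : q₂ < 1 / (a + 1) := by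
    rw [hsq] at hq₂c
    have h1 : a * a - 1 = (a - 1) * (a + 1) := by ring
    have h2 : (a - 1) / (a * a - 1) = 1 / (a + 1) := by
      rw [h1, div_eq_div_iff (by nlinarith) (by nlinarith)]
      ring
    rwa [h2] at hq₂c
  have hE : Real.exp (ε * l) = a ^ l := by
    rw [Real.rpow_def_of_pos (by positivity), ha_def, Real.log_exp]
  set f : ℝ → ℝ := fun q => (1 - q) * ((1 - q) / (1 - a * q)) ^ l
      + q * Real.exp (ε * l) with hf_def
  -- basic positivity facts on [0, q₂]
  have hv_pos : ∀ x : ℝ, x ≤ q₂ → 0 < 1 - a * x := by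
    intro x hx
    have : a * x < a * (1 / (a + 1)) := by
      rcases lt_or_ge x 0 with h | h
      · nlinarith
      · have : x < 1 / (a + 1) := lt_of_le_of_lt hx hc
        nlinarith
    have : a * (1 / (a + 1)) < 1 := by
      rw [mul_one_div, div_lt_one (by linarith)]
      linarith
    nlinarith [mul_lt_mul_of_pos_left (lt_of_le_of_lt hx hc) (show (0:ℝ) < a by linarith)]
  have hu_pos : ∀ x : ℝ, x ≤ q₂ → 0 < 1 - x := fun x hx => by linarith [lt_of_le_of_lt hx hq₂1]
  -- derivative of f
  have hderiv : ∀ x : ℝ, 0 ≤ x → x ≤ q₂ →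
      HasDerivAt f
        ((-1) * ((1 - x) / (1 - a * x)) ^ l
          + (1 - x) * ((l * ((1 - x) / (1 - a * x)) ^ (l - 1)) *
              (((-1) * (1 - a * x) - (1 - x) * (-a)) / (1 - a * x) ^ 2))
          + Real.exp (ε * l)) x := by
    intro x hx0 hx2
    have hv := hv_pos x hx2
    have hu := hu_pos x hx2
    have hr_pos : 0 < (1 - x) / (1 - a * x) := div_pos hu hv
    have hu' : HasDerivAt (fun q : ℝ => 1 - q) (-1) x := by
      simpa using (hasDerivAt_id x).const_sub 1
    have hv' : HasDerivAt (fun q : ℝ => 1 - a * q) (-a) x := by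
      simpa using ((hasDerivAt_id x).const_mul a).const_sub 1
    have hr' : HasDerivAt (fun q : ℝ => (1 - q) / (1 - a * q))
        (((-1) * (1 - a * x) - (1 - x) * (-a)) / (1 - a * x) ^ 2) x :=
      hu'.div hv' (ne_of_gt hv)
    have hrp : HasDerivAt (fun q : ℝ => ((1 - q) / (1 - a * q)) ^ l)
        ((l * ((1 - x) / (1 - a * x)) ^ (l - 1)) *
          (((-1) * (1 - a * x) - (1 - x) * (-a)) / (1 - a * x) ^ 2)) x :=
      by have := (Real.hasDerivAt_rpow_const (p := l) (Or.inl (ne_of_gt hr_pos))).comp x hr'; exact this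
    have h1 : HasDerivAt (fun q : ℝ => (1 - q) * ((1 - q) / (1 - a * q)) ^ l)
        ((-1) * ((1 - x) / (1 - a * x)) ^ l
          + (1 - x) * ((l * ((1 - x) / (1 - a * x)) ^ (l - 1)) *
              (((-1) * (1 - a * x) - (1 - x) * (-a)) / (1 - a * x) ^ 2))) x :=
      hu'.mul hrp
    have h2 : HasDerivAt (fun q : ℝ => q * Real.exp (ε * l)) (Real.exp (ε * l)) x := by
      simpa using (hasDerivAt_id x).mul_const (Real.exp (ε * l))
    exact h1.add h2
  have hmono : MonotoneOn f (Set.Icc 0 q₂) := by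
    have hq₂0 : 0 ≤ q₂ := hq₁.trans h12
    apply monotoneOn_of_deriv_nonneg (convex_Icc 0 q₂)
    · intro x hx
      exact (hderiv x hx.1 hx.2).continuousAt.continuousWithinAt
    · intro x hx
      rw [interior_Icc] at hx
      exact (hderiv x hx.1.le hx.2.le).differentiableAt.differentiableWithinAt
    · intro x hx
      rw [interior_Icc] at hx
      rw [(hderiv x hx.1.le hx.2.le).deriv]
      have hv := hv_pos x hx.2.le
      have hu := hu_pos x hx.2.le
      have hr_pos : 0 < (1 - x) / (1 - a * x) := div_pos hu hv
      -- r ≤ a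
      have hra : (1 - x) / (1 - a * x) ≤ a := by
        rw [div_le_iff₀ hv]
        have hx1 : x < 1 / (a + 1) := lt_trans hx.2 hc
        have : x * (a + 1) < 1 := by
          rw [← lt_div_iff₀ (by linarith : (0:ℝ) < a + 1)]
          exact hx1
        nlinarith
      have hrl : ((1 - x) / (1 - a * x)) ^ l ≤ a ^ l :=
        Real.rpow_le_rpow hr_pos.le hra hl
      have hmid : 0 ≤ (1 - x) * ((l * ((1 - x) / (1 - a * x)) ^ (l - 1)) *
          (((-1) * (1 - a * x) - (1 - x) * (-a)) / (1 - a * x) ^ 2)) := by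
        have hnum : 0 ≤ (-1) * (1 - a * x) - (1 - x) * (-a) := by nlinarith
        have := Real.rpow_nonneg hr_pos.le (l - 1)
        positivity
      rw [hE]
      nlinarith
  -- memberships
  have hq₂0 : 0 ≤ q₂ := hq₁.trans h12
  have hle : f q₁ ≤ f q₂ :=
    hmono ⟨hq₁, h12⟩ ⟨le_refl 0 |>.trans hq₂0, le_refl q₂⟩ h12
  have hpos : 0 < f q₁ := by
    have hu := hu_pos q₁ h12
    have hv := hv_pos q₁ h12
    have : 0 < ((1 - q₁) / (1 - a * q₁)) ^ l := Real.rpow_pos_of_pos (div_pos hu hv) l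
    have hE' : 0 < Real.exp (ε * l) := Real.exp_pos _
    simp only [hf_def]
    nlinarith
  exact Real.log_le_log hpos hle
end

section
/- Let v ∈ ℝ^C be vote counts with unique maximizer o*, and let g = min_{o≠o*}(v_{o*} − v_o) > 0 be the margin. Then the failure probability of Laplace noisy argmax with scale 1/γ satisfies Pr[M(v) ≠ o*] ≤ (C−1)·(2 + γg)/(4·exp(γg)); in particular it tends to 0 exponentially as the margin g → ∞. -/
open MeasureTheory ProbabilityTheory Filter

section LapAux

open Real Set

noncomputable def lapΦ (γ t : ℝ) : ℝ :=
  if t ≤ 0 then Real.exp (γ * t) / 2 else 1 - Real.exp (-(γ * t)) / 2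

lemma myexp_int_Ioi {c : ℝ} (hc : 0 < c) (a : ℝ) :
    IntegrableOn (fun x => Real.exp (-(c * x))) (Ioi a) := by
  simpa [neg_mul] using exp_neg_integrableOn_Ioi a hc

lemma myexp_deriv (c x : ℝ) (hc : c ≠ 0) :
    HasDerivAt (fun x => -Real.exp (-(c * x)) / c) (Real.exp (-(c * x))) x := by
  have h1 : HasDerivAt (fun x : ℝ => -(c * x)) (-c) x := by
    simpa using ((hasDerivAt_id x).const_mul c).fun_neg
  have h2 := (Real.hasDerivAt_exp (-(c * x))).comp x h1
  have h3 := (h2.neg).div_const c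
  exact h3.congr_deriv (by field_simp)

lemma myexp_tendsto {c : ℝ} (hc : 0 < c) :
    Tendsto (fun x => -Real.exp (-(c * x)) / c) atTop (nhds 0) := by
  have h1 : Tendsto (fun x : ℝ => c * x) atTop atTop :=
    Tendsto.const_mul_atTop hc tendsto_id
  have h2 : Tendsto (fun x : ℝ => Real.exp (-(c * x))) atTop (nhds 0) :=
    (Real.tendsto_exp_neg_atTop_nhds_zero).comp h1
  simpa using (h2.neg).div_const c

lemma myexp_integral_Ioi {c : ℝ} (hc : 0 < c) (a : ℝ) :
    ∫ x in Ioi a, Real.exp (-(c * x)) = Real.exp (-(c * a)) / c := by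
  have h := integral_Ioi_of_hasDerivAt_of_tendsto'
    (fun x _ => myexp_deriv c x hc.ne') (myexp_int_Ioi hc a) (myexp_tendsto hc)
  rw [h]
  field_simp
  ring

lemma myexp_int_Iic {c : ℝ} (hc : 0 < c) (a : ℝ) :
    IntegrableOn (fun x => Real.exp (c * x)) (Iic a) := by
  have h := myexp_int_Ioi hc (-a)
  have h2 := (MeasurePreserving.integrableOn_comp_preimage
    (Measure.measurePreserving_neg (volume : Measure ℝ))
    (Homeomorph.neg ℝ).measurableEmbedding).2 h
  have h3 : IntegrableOn (fun x : ℝ => Real.exp (c * x)) (Iio a) := by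
    have he : (Neg.neg ⁻¹' Ioi (-a) : Set ℝ) = Iio a := by
      ext x; simp [neg_lt]
    have : ((fun x => Real.exp (-(c * x))) ∘ Neg.neg) = fun x : ℝ => Real.exp (c * x) := by
      funext x; simp [Function.comp]
    rwa [this, he] at h2
  rw [integrableOn_Iic_iff_integrableOn_Iio]
  exact h3

lemma myexp_integral_Iic {c : ℝ} (hc : 0 < c) (a : ℝ) :
    ∫ x in Iic a, Real.exp (c * x) = Real.exp (c * a) / c := by
  have hd : ∀ x ∈ Iic a, HasDerivAt (fun x => Real.exp (c * x) / c) (Real.exp (c * x)) x := by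
    intro x _
    have h1 : HasDerivAt (fun x : ℝ => c * x) c x := by
      simpa using (hasDerivAt_id x).const_mul c
    have h2 := ((Real.hasDerivAt_exp (c * x)).comp x h1).div_const c
    exact h2.congr_deriv (by field_simp)
  have ht : Tendsto (fun x => Real.exp (c * x) / c) atBot (nhds 0) := by
    have h1 : Tendsto (fun x : ℝ => c * x) atBot atBot :=
      Tendsto.const_mul_atBot hc tendsto_id
    have h2 : Tendsto (fun x : ℝ => Real.exp (c * x)) atBot (nhds 0) :=
      Real.tendsto_exp_atBot.comp h1
    simpa using h2.div_const c
  have h := integral_Iic_of_hasDerivAt_of_tendsto' hd (myexp_int_Iic hc a) ht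
  rw [h]; ring


variable {γ g : ℝ}

lemma lap_nonneg (hγ : 0 < γ) (x : ℝ) : 0 ≤ laplacePDF γ x := by
  unfold laplacePDF; positivity

lemma lap_cont : Continuous (laplacePDF γ) := by
  unfold laplacePDF
  exact continuous_const.mul ((continuous_const.mul continuous_abs).rexp)

lemma lap_eq_left {x : ℝ} (hx : x ≤ 0) : laplacePDF γ x = (γ / 2) * Real.exp (γ * x) := by
  unfold laplacePDF
  rw [abs_of_nonpos hx]; ring_nf

lemma lap_eq_right {x : ℝ} (hx : 0 ≤ x) : laplacePDF γ x = (γ / 2) * Real.exp (-(γ * x)) := by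
  unfold laplacePDF
  rw [abs_of_nonneg hx]; ring_nf

lemma lap_int_Iic (hγ : 0 < γ) (t : ℝ) (ht : t ≤ 0) :
    IntegrableOn (laplacePDF γ) (Iic t) := by
  refine IntegrableOn.congr_fun ((myexp_int_Iic hγ t).const_mul (γ / 2)) ?_ measurableSet_Iic
  intro x hx
  exact (lap_eq_left (le_trans hx ht)).symm

lemma lap_int_Ioi (hγ : 0 < γ) (t : ℝ) (ht : 0 ≤ t) :
    IntegrableOn (laplacePDF γ) (Ioi t) := by
  refine IntegrableOn.congr_fun ((myexp_int_Ioi hγ t).const_mul (γ / 2)) ?_ measurableSet_Ioi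
  intro x hx
  exact (lap_eq_right (le_trans ht (le_of_lt hx))).symm

lemma lap_integrable (hγ : 0 < γ) : Integrable (laplacePDF γ) := by
  rw [← integrableOn_univ, ← Set.Iic_union_Ioi (a := (0:ℝ))]
  exact (lap_int_Iic hγ 0 le_rfl).union (lap_int_Ioi hγ 0 le_rfl)

lemma lap_integral_Iic_neg (hγ : 0 < γ) {t : ℝ} (ht : t ≤ 0) :
    ∫ x in Iic t, laplacePDF γ x = Real.exp (γ * t) / 2 := by
  rw [setIntegral_congr_fun measurableSet_Iic
    (fun x hx => lap_eq_left (le_trans hx ht)), integral_const_mul, myexp_integral_Iic hγ t]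
  field_simp

lemma lap_integral_Ioi_pos (hγ : 0 < γ) {t : ℝ} (ht : 0 ≤ t) :
    ∫ x in Ioi t, laplacePDF γ x = Real.exp (-(γ * t)) / 2 := by
  rw [setIntegral_congr_fun measurableSet_Ioi
    (fun x hx => lap_eq_right (le_trans ht (le_of_lt hx))), integral_const_mul,
    myexp_integral_Ioi hγ t]
  field_simp

lemma lap_integral_Ioc (hγ : 0 < γ) {t : ℝ} (ht : 0 ≤ t) :
    ∫ x in Ioc 0 t, laplacePDF γ x = 1 / 2 - Real.exp (-(γ * t)) / 2 := by
  have hsplit : Ioc (0:ℝ) t ∪ Ioi t = Ioi 0 := Ioc_union_Ioi_eq_Ioi ht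
  have hu := setIntegral_union (Set.Ioc_disjoint_Ioi le_rfl) measurableSet_Ioi
    ((lap_int_Ioi hγ 0 le_rfl).mono_set (by rw [← hsplit]; exact subset_union_left))
    (lap_int_Ioi hγ t ht) (f := laplacePDF γ) (μ := volume)
  rw [hsplit] at hu
  have h0 := lap_integral_Ioi_pos hγ (le_refl 0)
  rw [lap_integral_Ioi_pos hγ ht] at hu
  simp only [mul_zero, neg_zero, Real.exp_zero] at h0
  rw [h0] at hu
  linarith

lemma lapCDF (hγ : 0 < γ) (t : ℝ) :
    (volume.withDensity fun x => ENNReal.ofReal (laplacePDF γ x)) (Iic t)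
      = ENNReal.ofReal (lapΦ γ t) := by
  rw [withDensity_apply _ measurableSet_Iic]
  by_cases ht : t ≤ 0
  · rw [← ofReal_integral_eq_lintegral_ofReal (lap_int_Iic hγ t ht)
      (Filter.Eventually.of_forall fun x => lap_nonneg hγ x),
      lap_integral_Iic_neg hγ ht, lapΦ, if_pos ht]
  · push_neg at ht
    have hsplit : Iic (0:ℝ) ∪ Ioc 0 t = Iic t := Iic_union_Ioc_eq_Iic ht.le
    have hIoc : IntegrableOn (laplacePDF γ) (Ioc 0 t) :=
      (lap_int_Ioi hγ 0 le_rfl).mono_set Ioc_subset_Ioi_self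
    have hInt : IntegrableOn (laplacePDF γ) (Iic t) := by
      rw [← hsplit]; exact (lap_int_Iic hγ 0 le_rfl).union hIoc
    rw [← ofReal_integral_eq_lintegral_ofReal hInt
      (Filter.Eventually.of_forall fun x => lap_nonneg hγ x)]
    congr 1
    have hu := setIntegral_union (Set.Iic_disjoint_Ioc le_rfl) measurableSet_Ioc
      (lap_int_Iic hγ 0 le_rfl) hIoc (f := laplacePDF γ) (μ := volume)
    rw [hsplit] at hu
    rw [hu, lap_integral_Iic_neg hγ le_rfl, lap_integral_Ioc hγ ht.le, lapΦ, if_neg (not_le.2 ht)]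
    simp; ring

lemma lapΦ_nonneg (hγ : 0 < γ) (t : ℝ) : 0 ≤ lapΦ γ t := by
  unfold lapΦ
  split_ifs with h
  · positivity
  · push_neg at h
    have : Real.exp (-(γ * t)) ≤ 1 := by
      rw [Real.exp_le_one_iff]
      nlinarith
    linarith

lemma lapΦ_le_one (hγ : 0 < γ) (t : ℝ) : lapΦ γ t ≤ 1 := by
  unfold lapΦ
  split_ifs with h
  · have : Real.exp (γ * t) ≤ 1 := by
      rw [Real.exp_le_one_iff]
      nlinarith
    linarith
  · have := Real.exp_pos (-(γ * t))
    linarith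

lemma lapΦ_measurable : Measurable (lapΦ γ) := by
  unfold lapΦ
  exact Measurable.ite (measurableSet_le measurable_id measurable_const)
    (by fun_prop) (by fun_prop)

lemma lapProd_integrable (hγ : 0 < γ) (g : ℝ) :
    Integrable (fun x => laplacePDF γ x * lapΦ γ (x - g)) := by
  refine (lap_integrable hγ).mono ?_ ?_
  · exact (lap_cont.measurable.mul
      (lapΦ_measurable.comp (measurable_id.sub measurable_const))).aestronglyMeasurable
  · refine Filter.Eventually.of_forall fun x => ?_
    rw [Real.norm_eq_abs, Real.norm_eq_abs, abs_of_nonneg (lap_nonneg hγ x),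
      abs_of_nonneg (mul_nonneg (lap_nonneg hγ x) (lapΦ_nonneg hγ _))]
    nlinarith [lap_nonneg hγ x, lapΦ_le_one hγ (x - g), lapΦ_nonneg hγ (x - g)]

lemma lapJ (hγ : 0 < γ) (hg : 0 < g) :
    ∫ x, laplacePDF γ x * lapΦ γ (x - g) = (2 + γ * g) / (4 * Real.exp (γ * g)) := by
  have hint := lapProd_integrable hγ g
  -- split ℝ into Iic g and Ioi g
  rw [← intervalIntegral.integral_Iic_add_Ioi (b := g) hint.integrableOn hint.integrableOn]
  -- split Iic g into Iic 0 and Ioc 0 g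
  have hsplit : Iic (0:ℝ) ∪ Ioc 0 g = Iic g := Iic_union_Ioc_eq_Iic hg.le
  have hu := setIntegral_union (s := Iic (0:ℝ)) (t := Ioc (0:ℝ) g)
    (Set.Iic_disjoint_Ioc le_rfl) measurableSet_Ioc
    hint.integrableOn hint.integrableOn
    (f := fun x => laplacePDF γ x * lapΦ γ (x - g)) (μ := volume)
  rw [hsplit] at hu
  rw [hu]
  have e1 : ∫ x in Iic (0:ℝ), laplacePDF γ x * lapΦ γ (x - g)
      = Real.exp (-(γ * g)) / 8 := by
    rw [setIntegral_congr_fun measurableSet_Iic (g := fun x =>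
        (γ / 4 * Real.exp (-(γ * g))) * Real.exp ((2 * γ) * x)) ?_]
    · rw [integral_const_mul, myexp_integral_Iic (by linarith) 0]
      simp
      field_simp
      ring
    · intro x hx
      simp only [mem_Iic] at hx
      show laplacePDF γ x * lapΦ γ (x - g) = γ / 4 * Real.exp (-(γ * g)) * Real.exp (2 * γ * x)
      rw [lap_eq_left hx, lapΦ, if_pos (by simp only [sub_nonpos]; linarith)]
      have k2 : Real.exp (γ * x) * Real.exp (γ * (x - g))
          = Real.exp (2 * γ * x) * Real.exp (-(γ * g)) := by
        rw [← Real.exp_add, ← Real.exp_add]; ring_nf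
      linear_combination (γ / 4) * k2
  have e2 : ∫ x in Ioc (0:ℝ) g, laplacePDF γ x * lapΦ γ (x - g)
      = γ * g / 4 * Real.exp (-(γ * g)) := by
    rw [setIntegral_congr_fun measurableSet_Ioc (g := fun _ =>
        γ / 4 * Real.exp (-(γ * g))) ?_]
    · rw [setIntegral_const]
      simp [Real.volume_Ioc, ENNReal.toReal_ofReal hg.le, max_eq_left hg.le]
      ring
    · intro x hx
      simp only [mem_Ioc] at hx
      show laplacePDF γ x * lapΦ γ (x - g) = γ / 4 * Real.exp (-(γ * g))
      rw [lap_eq_right hx.1.le, lapΦ, if_pos (by simp only [sub_nonpos]; linarith [hx.2])]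
      have k : Real.exp (-(γ * x)) * Real.exp (γ * (x - g)) = Real.exp (-(γ * g)) := by
        rw [← Real.exp_add]; ring_nf
      linear_combination (γ / 4) * k
  have e3 : ∫ x in Ioi g, laplacePDF γ x * lapΦ γ (x - g)
      = Real.exp (-(γ * g)) / 2 - Real.exp (-(γ * g)) / 8 := by
    have heq : EqOn (fun x => laplacePDF γ x * lapΦ γ (x - g))
        (fun x => (γ / 2) * Real.exp (-(γ * x))
          - (γ / 4 * Real.exp (γ * g)) * Real.exp (-((2 * γ) * x))) (Ioi g) := by
      intro x hx
      simp only [mem_Ioi] at hx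
      show laplacePDF γ x * lapΦ γ (x - g)
        = γ / 2 * Real.exp (-(γ * x)) - γ / 4 * Real.exp (γ * g) * Real.exp (-(2 * γ * x))
      rw [lap_eq_right (by linarith), lapΦ, if_neg (by simp only [sub_nonpos]; push_neg; nlinarith)]
      have k3 : Real.exp (-(γ * x)) * Real.exp (-(γ * (x - g)))
          = Real.exp (γ * g) * Real.exp (-(2 * γ * x)) := by
        rw [← Real.exp_add, ← Real.exp_add]; ring_nf
      linear_combination (-(γ / 4)) * k3
    rw [setIntegral_congr_fun measurableSet_Ioi heq]
    have hi1 : IntegrableOn (fun x => (γ / 2) * Real.exp (-(γ * x))) (Ioi g) :=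
      (myexp_int_Ioi hγ g).const_mul _
    have hi2 : IntegrableOn (fun x => (γ / 4 * Real.exp (γ * g)) * Real.exp (-((2 * γ) * x)))
        (Ioi g) := (myexp_int_Ioi (by linarith) g).const_mul _
    rw [integral_sub hi1 hi2, integral_const_mul, integral_const_mul,
      myexp_integral_Ioi hγ g, myexp_integral_Ioi (show (0:ℝ) < 2 * γ by linarith) g]
    have key : Real.exp (γ * g) * Real.exp (-(2 * γ * g)) = Real.exp (-(γ * g)) := by
      rw [← Real.exp_add]; ring_nf
    have h1 : γ / 2 * (Real.exp (-(γ * g)) / γ) = Real.exp (-(γ * g)) / 2 := by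
      field_simp [hγ.ne']
    have h2 : γ / 4 * Real.exp (γ * g) * (Real.exp (-(2 * γ * g)) / (2 * γ))
        = Real.exp (-(γ * g)) / 8 := by
      rw [show γ / 4 * Real.exp (γ * g) * (Real.exp (-(2 * γ * g)) / (2 * γ))
          = Real.exp (γ * g) * Real.exp (-(2 * γ * g)) / 8 by
        field_simp [hγ.ne']; ring, key]
    rw [h1, h2]
  rw [e1, e2, e3]
  rw [show γ * g = -(-(γ * g)) by ring, Real.exp_neg]
  field_simp
  ring

lemma lapProd {γ g : ℝ} (hγ : 0 < γ) (hg : 0 < g)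
    [SFinite (volume.withDensity fun x => ENNReal.ofReal (laplacePDF γ x))] :
    ((volume.withDensity fun x => ENNReal.ofReal (laplacePDF γ x)).prod
      (volume.withDensity fun x => ENNReal.ofReal (laplacePDF γ x)))
      {p : ℝ × ℝ | p.2 + g ≤ p.1}
      = ENNReal.ofReal ((2 + γ * g) / (4 * Real.exp (γ * g))) := by
  set ν := volume.withDensity fun x => ENNReal.ofReal (laplacePDF γ x) with hν
  have hset : MeasurableSet {p : ℝ × ℝ | p.2 + g ≤ p.1} :=
    measurableSet_le (measurable_snd.add_const g) measurable_fst
  rw [Measure.prod_apply hset]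
  have hpre : ∀ x : ℝ, ν (Prod.mk x ⁻¹' {p : ℝ × ℝ | p.2 + g ≤ p.1})
      = ENNReal.ofReal (lapΦ γ (x - g)) := by
    intro x
    have : Prod.mk x ⁻¹' {p : ℝ × ℝ | p.2 + g ≤ p.1} = Iic (x - g) := by
      ext y; simp [le_sub_iff_add_le]
    rw [this, hν, lapCDF hγ]
  simp_rw [hpre, hν]
  have hmeas : Measurable fun x : ℝ => ENNReal.ofReal (lapΦ γ (x - g)) :=
    (lapΦ_measurable.comp (measurable_id.sub_const g)).ennreal_ofReal
  rw [lintegral_withDensity_eq_lintegral_mul _ (lap_cont.measurable.ennreal_ofReal) hmeas]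
  have : ∀ x : ℝ, ENNReal.ofReal (laplacePDF γ x) * ENNReal.ofReal (lapΦ γ (x - g))
      = ENNReal.ofReal (laplacePDF γ x * lapΦ γ (x - g)) := fun x =>
    (ENNReal.ofReal_mul (lap_nonneg hγ x)).symm
  simp only [Pi.mul_apply]
  simp_rw [this]
  rw [← ofReal_integral_eq_lintegral_ofReal (lapProd_integrable hγ g)
    (Filter.Eventually.of_forall fun x => mul_nonneg (lap_nonneg hγ x) (lapΦ_nonneg hγ _)),
    lapJ hγ hg]

lemma lapTendsto (c : ℝ) {γ : ℝ} (hγ : 0 < γ) :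
    Tendsto (fun g : ℝ => c * (2 + γ * g) / (4 * Real.exp (γ * g))) atTop (nhds 0) := by
  have h1 : Tendsto (fun u : ℝ => (2 + u) * Real.exp (-u)) atTop (nhds 0) := by
    have ha := (Real.tendsto_exp_neg_atTop_nhds_zero).const_mul (2 : ℝ)
    have hb := tendsto_pow_mul_exp_neg_atTop_nhds_zero 1
    have hc := ha.add hb
    simp only [mul_zero, add_zero] at hc
    refine hc.congr fun u => ?_
    simp only [pow_one]
    ring
  have h2 : Tendsto (fun g : ℝ => γ * g) atTop atTop :=
    Tendsto.const_mul_atTop hγ tendsto_id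
  have h3 := (h1.comp h2).const_mul (c / 4)
  simp only [mul_zero] at h3
  refine h3.congr fun x => ?_
  simp only [Function.comp]
  rw [Real.exp_neg]
  field_simp

end LapAux

/-- Let `v ∈ ℝ^C` be vote counts with unique maximizer `o*` and margin
`g = min_{o ≠ o*} (v o* - v o) > 0`. Then the failure probability of Laplace
noisy argmax with scale `1/γ` satisfies
`Pr[M(v) ≠ o*] ≤ (C-1) (2 + γ g)/(4 exp(γ g))`; and this bound tends to `0`
(exponentially) as the margin `g → ∞`. -/
theorem stmt_15 {O : Type*} [Fintype O] [DecidableEq O] [MeasurableSpace O]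
    [MeasurableSingletonClass O]
    {A : Type*} [MeasurableSpace A] (μ : Measure A) [IsProbabilityMeasure μ]
    (γ : ℝ) (hγ : 0 < γ)
    (v : O → ℝ) (oStar : O) (hmax : ∀ o, o ≠ oStar → v o < v oStar)
    (g : ℝ) (hg : 0 < g) (hgle : ∀ o, o ≠ oStar → g ≤ v oStar - v o)
    (N : O → A → ℝ) (hN : ∀ o, Measurable (N o))
    (hlaw : ∀ o, μ.map (N o)
      = volume.withDensity (fun x => ENNReal.ofReal (laplacePDF γ x)))
    (hindep : iIndepFun N μ)
    (M : A → O) (hM : Measurable M)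
    (hargmax : ∀ a o, v o + N o a ≤ v (M a) + N (M a) a) :
    μ {a | M a ≠ oStar}
      ≤ ENNReal.ofReal ((Fintype.card O - 1)
          * (2 + γ * g) / (4 * Real.exp (γ * g))) ∧
    Tendsto (fun g : ℝ => (Fintype.card O - 1)
        * (2 + γ * g) / (4 * Real.exp (γ * g))) atTop (nhds 0) := by
  constructor
  · have hprob : IsProbabilityMeasure
        (volume.withDensity fun x => ENNReal.ofReal (laplacePDF γ x)) := by
      rw [← hlaw oStar]
      exact Measure.isProbabilityMeasure_map (hN oStar).aemeasurable
    haveI := hprob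
    set S := Finset.univ.erase oStar with hS
    set B := (2 + γ * g) / (4 * Real.exp (γ * g)) with hB
    have hsub : {a | M a ≠ oStar} ⊆ ⋃ o ∈ S, {a | N oStar a + g ≤ N o a} := by
      intro a ha
      simp only [Set.mem_setOf_eq] at ha
      refine Set.mem_iUnion₂.2 ⟨M a, Finset.mem_erase.2 ⟨ha, Finset.mem_univ _⟩, ?_⟩
      have h1 := hargmax a oStar
      have h2 := hgle (M a) ha
      simp only [Set.mem_setOf_eq]
      linarith
    have hterm : ∀ o ∈ S, μ {a | N oStar a + g ≤ N o a} = ENNReal.ofReal B := by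
      intro o hoS
      have ho : o ≠ oStar := (Finset.mem_erase.1 hoS).1
      have hIF : IndepFun (N o) (N oStar) μ := hindep.indepFun ho
      have hpair : μ.map (fun a => (N o a, N oStar a))
          = (volume.withDensity fun x => ENNReal.ofReal (laplacePDF γ x)).prod
            (volume.withDensity fun x => ENNReal.ofReal (laplacePDF γ x)) := by
        rw [(ProbabilityTheory.indepFun_iff_map_prod_eq_prod_map_map (hN o).aemeasurable
          (hN oStar).aemeasurable).1 hIF, hlaw, hlaw]
      have hset : MeasurableSet {p : ℝ × ℝ | p.2 + g ≤ p.1} :=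
        measurableSet_le (measurable_snd.add_const g) measurable_fst
      have hpreim : {a | N oStar a + g ≤ N o a}
          = (fun a => (N o a, N oStar a)) ⁻¹' {p : ℝ × ℝ | p.2 + g ≤ p.1} := rfl
      rw [hpreim, ← Measure.map_apply ((hN o).prodMk (hN oStar)) hset, hpair,
        lapProd hγ hg]
    calc μ {a | M a ≠ oStar}
        ≤ μ (⋃ o ∈ S, {a | N oStar a + g ≤ N o a}) := measure_mono hsub
      _ ≤ ∑ o ∈ S, μ {a | N oStar a + g ≤ N o a} := measure_biUnion_finset_le S _
      _ = S.card * ENNReal.ofReal B := by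
          rw [Finset.sum_congr rfl hterm, Finset.sum_const, nsmul_eq_mul]
      _ = ENNReal.ofReal ((Fintype.card O - 1)
            * (2 + γ * g) / (4 * Real.exp (γ * g))) := by
          have hcard : (S.card : ℝ) = (Fintype.card O : ℝ) - 1 := by
            rw [hS, Finset.card_erase_of_mem (Finset.mem_univ _)]
            have h1 : 1 ≤ Fintype.card O := Fintype.card_pos_iff.2 ⟨oStar⟩
            rw [Nat.cast_sub (by simpa [Finset.card_univ] using h1)]
            simp [Finset.card_univ]
          rw [mul_div_assoc, ← hB, ← hcard,
            ENNReal.ofReal_mul (Nat.cast_nonneg _), ENNReal.ofReal_natCast]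
  · exact lapTendsto _ hγ
end
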